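/- arXiv:1008.2557 — 2 statements merged into one kernel-verified Lean document; each statement's English description precedes it below -/
import Mathlib

section
/- Let G be a finite multidigraph with an edge e* = (w*, v*) such that every vertex has in-degree at least 1, the vertex v* has in-degree at least 2, and G is k-out-regular for a positive integer k. Then the kernel of the surjective homomorphism ρ̄ : K(𝓛G, e*) → K(G, w*) induced by ρ is exactly the k-torsion subgroup of K(𝓛G, e*), i.e. {x ∈ K(𝓛G, e*) : k·x = 0}. -/
open Finsupp
set_option linter.unusedSectionVars false
set_option linter.unusedVariables false

/-- The Laplacian of a multidigraph with edge tail map `t` and head map `h`,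
as a linear endomorphism of the free abelian group on the vertices. -/
noncomputable def lap {V E : Type*} [Fintype E] [DecidableEq V] (t h : E → V) :
    (V →₀ ℤ) →ₗ[ℤ] (V →₀ ℤ) :=
  Finsupp.lift (V →₀ ℤ) ℤ V fun v =>
    ∑ e : E, if t e = v then Finsupp.single (h e) (1 : ℤ) - Finsupp.single v 1 else 0

/-- The modified Laplacian `φ_{G,w}` : sends `v ↦ Δ_G v` for `v ≠ w`, and `w ↦ w`. -/
noncomputable def phiMod {V E : Type*} [Fintype E] [DecidableEq V] (t h : E → V) (w : V) :
    (V →₀ ℤ) →ₗ[ℤ] (V →₀ ℤ) :=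
  Finsupp.lift (V →₀ ℤ) ℤ V fun v =>
    if v = w then Finsupp.single w 1 else lap t h (Finsupp.single v 1)

/-- Edges of the directed line graph: pairs `(e, f)` with `e⁺ = f⁻`. -/
def LineEdge {V E : Type*} (t h : E → V) : Type _ := {p : E × E // h p.1 = t p.2}

instance {V E : Type*} [Fintype E] [DecidableEq V] (t h : E → V) :
    Fintype (LineEdge t h) := by
  unfold LineEdge; infer_instance

/-- in-degree of a vertex -/
def indeg {V E : Type*} [Fintype E] [DecidableEq V] (h : E → V) (v : V) : ℕ :=
  (Finset.univ.filter fun e => h e = v).card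

/-- out-degree of a vertex -/
def outdeg {V E : Type*} [Fintype E] [DecidableEq V] (t : E → V) (v : V) : ℕ :=
  (Finset.univ.filter fun e => t e = v).card

/-- The modified target map `τ`: `e ↦ e⁺` for `e ≠ e*`, `e* ↦ 0`. -/
noncomputable def tau {V E : Type*} [DecidableEq E] (h : E → V) (estar : E) :
    (E →₀ ℤ) →ₗ[ℤ] (V →₀ ℤ) :=
  Finsupp.lift (V →₀ ℤ) ℤ E fun e =>
    if e = estar then 0 else Finsupp.single (h e) 1

/-- The map `ρ`: `e ↦ Δ_G(w*) − v* − w* + e⁺` for `e ≠ e*`, `e* ↦ 0`,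
where `w* = t e*` and `v* = h e*`. -/
noncomputable def rho {V E : Type*} [Fintype E] [DecidableEq V] [DecidableEq E]
    (t h : E → V) (estar : E) : (E →₀ ℤ) →ₗ[ℤ] (V →₀ ℤ) :=
  Finsupp.lift (V →₀ ℤ) ℤ E fun e =>
    if e = estar then 0 else
      lap t h (Finsupp.single (t estar) 1) - Finsupp.single (h estar) 1
        - Finsupp.single (t estar) 1 + Finsupp.single (h e) 1

/-- The map `ρ₀`: `v ↦ Δ_G(w*) − v* − w* + v`. -/
noncomputable def rho0 {V E : Type*} [Fintype E] [DecidableEq V] (t h : E → V) (estar : E) :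
    (V →₀ ℤ) →ₗ[ℤ] (V →₀ ℤ) :=
  Finsupp.lift (V →₀ ℤ) ℤ V fun v =>
    lap t h (Finsupp.single (t estar) 1) - Finsupp.single (h estar) 1
      - Finsupp.single (t estar) 1 + Finsupp.single v 1

/-- The map `ψ`: `v ↦ Δ_G v` for `v ≠ w*`, and `w* ↦ Δ_G(w*) − v*`. -/
noncomputable def psi {V E : Type*} [Fintype E] [DecidableEq V] (t h : E → V) (estar : E) :
    (V →₀ ℤ) →ₗ[ℤ] (V →₀ ℤ) :=
  Finsupp.lift (V →₀ ℤ) ℤ V fun v =>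
    if v = t estar then
      lap t h (Finsupp.single (t estar) 1) - Finsupp.single (h estar) 1
    else lap t h (Finsupp.single v 1)

/-- The map `σ`: `v ↦ Σ_{e⁻ = v} e`. -/
noncomputable def sigmaMap {V E : Type*} [Fintype E] [DecidableEq V] (t : E → V) :
    (V →₀ ℤ) →ₗ[ℤ] (E →₀ ℤ) :=
  Finsupp.lift (E →₀ ℤ) ℤ V fun v =>
    ∑ e : E, if t e = v then Finsupp.single e (1 : ℤ) else 0

section Aux
variable {V E : Type*} [Fintype V] [Fintype E] [DecidableEq V] [DecidableEq E]

lemma lift_single1 {X M : Type*} [AddCommGroup M] [Module ℤ M] (f : X → M) (x : X) :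
    Finsupp.lift M ℤ X f (Finsupp.single x 1) = f x := by
  rw [Finsupp.lift_apply, Finsupp.sum_single_index]
  all_goals module

lemma lhom_ext1 {X M : Type*} [AddCommGroup M] [Module ℤ M]
    {F G : (X →₀ ℤ) →ₗ[ℤ] M} (H : ∀ v, F (single v 1) = G (single v 1)) : F = G := by
  refine Finsupp.lhom_ext fun a b => ?_
  have hb : (Finsupp.single a b : X →₀ ℤ) = b • Finsupp.single a 1 := by simp
  rw [hb, LinearMap.map_smul, LinearMap.map_smul, H]

/-- sum-of-coefficients functional -/
noncomputable def S (V : Type*) : (V →₀ ℤ) →ₗ[ℤ] ℤ :=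
  Finsupp.lift ℤ ℤ V fun _ => (1 : ℤ)

@[simp] lemma S_single (v : V) (c : ℤ) : S V (single v c) = c := by
  have : (single v c : V →₀ ℤ) = c • single v 1 := by simp
  rw [this, LinearMap.map_smul, S, lift_single1, smul_eq_mul, mul_one]

variable (t h : E → V)

@[simp] lemma lap_single (v : V) :
    lap t h (single v 1)
      = ∑ e : E, if t e = v then single (h e) (1:ℤ) - single v 1 else 0 :=
  lift_single1 _ _

@[simp] lemma sigma_single (v : V) :
    sigmaMap t (single v 1) = ∑ e : E, if t e = v then single e (1:ℤ) else 0 :=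
  lift_single1 _ _

@[simp] lemma phiMod_single (w v : V) :
    phiMod t h w (single v 1)
      = if v = w then single w 1 else lap t h (single v 1) :=
  lift_single1 _ _

@[simp] lemma tau_single (estar e : E) :
    tau h estar (single e 1) = if e = estar then 0 else single (h e) 1 :=
  lift_single1 _ _

lemma S_lap (x : V →₀ ℤ) : S V (lap t h x) = 0 := by
  have : (S V).comp (lap t h) = 0 := by
    refine lhom_ext1 fun v => ?_
    simp only [LinearMap.comp_apply, lap_single, LinearMap.zero_apply, map_sum]
    rw [Finset.sum_eq_zero]
    intro e _
    split_ifs <;> simp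
  exact DFunLike.congr_fun this x

end Aux

set_option linter.unusedSectionVars false

section Aux2
variable {V E : Type*} [Fintype V] [Fintype E] [DecidableEq V] [DecidableEq E]
variable (t h : E → V)

lemma sum_ite_sub {α M : Type*} [Fintype α] [AddCommGroup M] (P : α → Prop) [DecidablePred P]
    (f : α → M) (c : M) :
    ∑ a : α, (if P a then f a - c else 0)
      = (∑ a : α, if P a then f a else 0) - (Finset.univ.filter P).card • c := by
  have : ∀ a : α, (if P a then f a - c else 0)
      = (if P a then f a else 0) - (if P a then c else 0) := by
    intro a; split_ifs <;> simp
  rw [Finset.sum_congr rfl fun a _ => this a, Finset.sum_sub_distrib]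
  congr 1
  rw [← Finset.sum_filter, Finset.sum_const]

lemma lineSum {M : Type*} [AddCommGroup M] (g : E → M) (e : E)
    [Fintype {p : E × E // h p.1 = t p.2}] :
    ∑ p : {p : E × E // h p.1 = t p.2}, (if p.1.1 = e then g p.1.2 else 0)
      = ∑ f : E, if t f = h e then g f else 0 := by
  rw [← Finset.sum_subtype (Finset.univ.filter fun q : E × E => h q.1 = t q.2)
      (by simp) (fun q => if q.1 = e then g q.2 else 0)]
  rw [Finset.sum_filter, Fintype.sum_prod_type]
  have : ∀ a b : E, (if h a = t b then if a = e then g b else 0 else 0)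
      = (if a = e then (if t b = h e then g b else 0) else 0) := by
    intro a b
    by_cases hae : a = e
    · subst hae; by_cases hb : t b = h a <;> simp [hb, eq_comm]
    · simp [hae]
  simp_rw [this]
  rw [Finset.sum_comm]
  simp [Finset.sum_ite_eq' Finset.univ e]

/-- `∑_{e⁻ = v} e⁺ = Δ v + k v` -/
lemma Tsingle {k : ℕ} (hreg : ∀ v : V, outdeg t v = k) (v : V) :
    ∑ e : E, (if t e = v then single (h e) (1:ℤ) else 0)
      = lap t h (single v 1) + (k:ℤ) • single v 1 := by
  rw [lap_single, sum_ite_sub]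
  have hc : (Finset.univ.filter fun e => t e = v).card = k := hreg v
  rw [hc, Nat.cast_smul_eq_nsmul ℤ k (single v (1:ℤ))]
  abel

lemma sum_ite_split {α M : Type*} [Fintype α] [AddCommGroup M] (P : α → Prop) [DecidablePred P]
    (f g : α → M) :
    ∑ a : α, (if P a then f a - g a else 0)
      = (∑ a : α, if P a then f a else 0) - (∑ a : α, if P a then g a else 0) := by
  rw [← Finset.sum_sub_distrib]
  exact Finset.sum_congr rfl fun a _ => by split_ifs <;> simp

lemma SumT {k : ℕ} (hreg : ∀ v : V, outdeg t v = k) (m : V →₀ ℤ) :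
    ∑ e : E, m (t e) • single (h e) (1:ℤ) = lap t h m + (k:ℤ) • m := by
  induction m using Finsupp.induction_linear with
  | zero => simp
  | add f g hf hg =>
      simp only [Finsupp.add_apply, add_smul, Finset.sum_add_distrib, hf, hg, map_add, smul_add]
      abel
  | single a b =>
      have hb : (single a b : V →₀ ℤ) = b • single a 1 := by simp
      calc ∑ e : E, (single a b : V →₀ ℤ) (t e) • single (h e) (1:ℤ)
          = ∑ e : E, (if t e = a then b • single (h e) (1:ℤ) else 0) := by
            refine Finset.sum_congr rfl fun e _ => ?_
            rw [Finsupp.single_apply]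
            by_cases h1 : t e = a
            · rw [if_pos h1, if_pos h1.symm]
            · rw [if_neg h1, if_neg (fun hh => h1 hh.symm), zero_smul]
        _ = b • ∑ e : E, (if t e = a then single (h e) (1:ℤ) else 0) := by
            rw [Finset.smul_sum]
            exact Finset.sum_congr rfl fun e _ => by split_ifs <;> simp
        _ = lap t h (single a b) + (k:ℤ) • single a b := by
            rw [Tsingle t h hreg a, hb, LinearMap.map_smul, smul_add, smul_comm]

lemma sigma_apply (u : V →₀ ℤ) (e : E) : (sigmaMap t u) e = u (t e) := by
  have hm : (Finsupp.lapply e : (E →₀ ℤ) →ₗ[ℤ] ℤ).comp (sigmaMap t)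
      = (Finsupp.lapply (t e) : (V →₀ ℤ) →ₗ[ℤ] ℤ) := by
    refine lhom_ext1 fun v => ?_
    simp only [LinearMap.comp_apply, sigma_single, Finsupp.lapply_apply]
    rw [Finsupp.finset_sum_apply]
    rw [Finsupp.single_apply]
    calc ∑ f : E, ((if t f = v then single f (1:ℤ) else 0) : E →₀ ℤ) e
        = ∑ f : E, (if f = e then (if t f = v then (1:ℤ) else 0) else 0) := by
          refine Finset.sum_congr rfl fun f _ => ?_
          by_cases hf : f = e
          · subst hf; split_ifs <;> simp_all [Finsupp.single_apply]
          · split_ifs <;> simp [Finsupp.single_apply, hf]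
      _ = (if v = t e then 1 else 0) := by
          rw [Finset.sum_ite_eq' Finset.univ e]
          simp [eq_comm]
  exact DFunLike.congr_fun hm u

lemma tau_apply (estar : E) (y : E →₀ ℤ) :
    tau h estar y = ∑ e : E, (if e = estar then 0 else y e • single (h e) (1:ℤ)) := by
  rw [tau, Finsupp.lift_apply, Finsupp.sum_fintype]
  · exact Finset.sum_congr rfl fun e _ => by split_ifs <;> simp
  · intro e; module

lemma lineSumL {M : Type*} [AddCommGroup M] (g : E → M) (e : E) :
    ∑ p : LineEdge t h, (if p.1.1 = e then g p.1.2 else 0)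
      = ∑ f : E, if t f = h e then g f else 0 := by
  unfold LineEdge
  exact lineSum t h g e

instance instDecEqLE (t h : E → V) : DecidableEq (LineEdge t h) := by
  unfold LineEdge; infer_instance

lemma lapL_single {k : ℕ} (hreg : ∀ v : V, outdeg t v = k) (e : E) :
    lap (fun p : LineEdge t h => p.1.1) (fun p : LineEdge t h => p.1.2) (single e 1)
      = sigmaMap t (single (h e) 1) - (k:ℤ) • single e 1 := by
  rw [lap_single, lineSumL t h ((fun f => single f (1:ℤ) - single e 1)) e, sum_ite_sub,
    sigma_single]
  have hc : (Finset.univ.filter fun f => t f = h e).card = k := hreg (h e)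
  rw [hc, Nat.cast_smul_eq_nsmul ℤ k (single e (1:ℤ))]

lemma phiL_single {k : ℕ} (hreg : ∀ v : V, outdeg t v = k) (estar e : E) :
    phiMod (fun p : LineEdge t h => p.1.1) (fun p : LineEdge t h => p.1.2) estar (single e 1)
      = if e = estar then single estar 1
        else sigmaMap t (single (h e) 1) - (k:ℤ) • single e 1 := by
  rw [phiMod_single]
  split_ifs with he
  · rfl
  · exact lapL_single t h hreg e

/-- M9 -/
lemma phiL_eq {k : ℕ} (hreg : ∀ v : V, outdeg t v = k) (estar : E) (x : E →₀ ℤ) :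
    phiMod (fun p : LineEdge t h => p.1.1) (fun p : LineEdge t h => p.1.2) estar x
      = sigmaMap t (tau h estar x) - (k:ℤ) • x
        + (x estar) • (((k:ℤ)+1) • single estar 1) := by
  have hm : phiMod (fun p : LineEdge t h => p.1.1) (fun p : LineEdge t h => p.1.2) estar
      = (sigmaMap t).comp (tau h estar) - (k:ℤ) • LinearMap.id
        + (Finsupp.lapply estar : (E →₀ ℤ) →ₗ[ℤ] ℤ).smulRight (((k:ℤ)+1) • single estar 1) := by
    refine lhom_ext1 fun e => ?_
    rw [phiL_single t h hreg estar e]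
    simp only [LinearMap.add_apply, LinearMap.sub_apply, LinearMap.comp_apply,
      LinearMap.smul_apply, LinearMap.id_apply, LinearMap.smulRight_apply,
      Finsupp.lapply_apply, tau_single, Finsupp.single_apply]
    split_ifs with he
    · subst he
      rw [map_zero]
      module
    · rw [zero_smul, add_zero]
  rw [hm]
  simp only [LinearMap.add_apply, LinearMap.sub_apply, LinearMap.comp_apply,
    LinearMap.smul_apply, LinearMap.id_apply, LinearMap.smulRight_apply, Finsupp.lapply_apply]

/-- M11 -/
lemma phiG_eq (estar : E) (x : V →₀ ℤ) :
    phiMod t h (t estar) x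
      = lap t h x + (x (t estar)) • (single (t estar) 1 - lap t h (single (t estar) 1)) := by
  have hm : phiMod t h (t estar)
      = lap t h + (Finsupp.lapply (t estar) : (V →₀ ℤ) →ₗ[ℤ] ℤ).smulRight
          (single (t estar) 1 - lap t h (single (t estar) 1)) := by
    refine lhom_ext1 fun v => ?_
    simp only [LinearMap.add_apply, LinearMap.smulRight_apply, Finsupp.lapply_apply,
      phiMod_single, Finsupp.single_apply]
    split_ifs with hv
    · subst hv; module
    · rw [zero_smul, add_zero]
  rw [hm]
  simp only [LinearMap.add_apply, LinearMap.smulRight_apply, Finsupp.lapply_apply]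

/-- M12 -/
lemma sigma_lap {k : ℕ} (hreg : ∀ v : V, outdeg t v = k) (estar : E) (x : V →₀ ℤ) :
    sigmaMap t (lap t h x)
      = phiMod (fun p : LineEdge t h => p.1.1) (fun p : LineEdge t h => p.1.2) estar
          (sigmaMap t x)
        - (x (t estar)) • (((k:ℤ)+1) • single estar 1 - sigmaMap t (single (h estar) 1)) := by
  set φL := phiMod (fun p : LineEdge t h => p.1.1) (fun p : LineEdge t h => p.1.2) estar
    with hφL
  have key : ∀ v : V, φL (sigmaMap t (single v 1))
      = sigmaMap t (lap t h (single v 1))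
        + (if v = t estar then ((k:ℤ)+1) • single estar 1 - sigmaMap t (single (h estar) 1)
           else 0) := by
    intro v
    rw [sigma_single, map_sum]
    have h1 : ∀ e : E, φL (if t e = v then single e (1:ℤ) else 0)
        = (if t e = v then sigmaMap t (single (h e) 1) - (k:ℤ) • single e 1 else 0)
          + (if v = t estar then
              (if e = estar then
                single estar 1 - (sigmaMap t (single (h estar) 1) - (k:ℤ) • single estar 1)
               else 0) else 0) := by
      intro e
      by_cases hv : v = t estar
      · by_cases he : e = estar
        · have htev : t e = v := by rw [he, ← hv]
          rw [if_pos htev, if_pos hv, if_pos he, if_pos htev, hφL,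
            phiL_single t h hreg estar e, if_pos he, he]
          abel
        · rw [if_pos hv, if_neg he, add_zero]
          by_cases hte : t e = v
          · rw [if_pos hte, if_pos hte, hφL, phiL_single t h hreg estar e, if_neg he]
          · rw [if_neg hte, if_neg hte, map_zero]
      · rw [if_neg hv, add_zero]
        by_cases hte : t e = v
        · have he : e ≠ estar := fun hee => hv (hee ▸ hte).symm
          rw [if_pos hte, if_pos hte, hφL, phiL_single t h hreg estar e, if_neg he]
        · rw [if_neg hte, if_neg hte, map_zero]
    rw [Finset.sum_congr rfl fun e _ => h1 e, Finset.sum_add_distrib]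
    congr 1
    · -- ∑ e, ite (t e = v) (σ (h e) − k e) 0 = σ (Δ v)
      rw [sum_ite_split]
      have h2 : (∑ e : E, if t e = v then sigmaMap t (single (h e) (1:ℤ)) else 0)
          = sigmaMap t (∑ e : E, if t e = v then single (h e) (1:ℤ) else 0) := by
        rw [map_sum]
        exact Finset.sum_congr rfl fun e _ => by split_ifs <;> simp
      have h3 : (∑ e : E, if t e = v then (k:ℤ) • single e (1:ℤ) else 0)
          = (k:ℤ) • sigmaMap t (single v 1) := by
        rw [sigma_single, Finset.smul_sum]
        exact Finset.sum_congr rfl fun e _ => by split_ifs <;> simp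
      rw [h2, h3, Tsingle t h hreg v, map_add, LinearMap.map_smul]
      abel
    · by_cases hv : v = t estar
      · rw [Finset.sum_congr rfl fun e _ => if_pos hv, if_pos hv,
          Finset.sum_ite_eq' Finset.univ estar
          (fun _ => single estar (1:ℤ) - (sigmaMap t (single (h estar) 1) - (k:ℤ) • single estar 1)),
          if_pos (Finset.mem_univ estar)]
        module
      · rw [Finset.sum_congr rfl fun e _ => if_neg hv, if_neg hv, Finset.sum_const, smul_zero]
  -- now upgrade to all x via linearity
  have hm : (sigmaMap t).comp (lap t h)
      = φL.comp (sigmaMap t)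
        - (Finsupp.lapply (t estar) : (V →₀ ℤ) →ₗ[ℤ] ℤ).smulRight
            (((k:ℤ)+1) • single estar 1 - sigmaMap t (single (h estar) 1)) := by
    refine lhom_ext1 fun v => ?_
    simp only [LinearMap.sub_apply, LinearMap.comp_apply, LinearMap.smulRight_apply,
      Finsupp.lapply_apply, Finsupp.single_apply]
    rw [key v]
    split_ifs with hv
    · rw [one_smul]; abel
    · rw [zero_smul]; abel
  have := DFunLike.congr_fun hm x
  simpa only [LinearMap.sub_apply, LinearMap.comp_apply, LinearMap.smulRight_apply,
    Finsupp.lapply_apply] using this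


noncomputable def Cvec (t h : E → V) (estar : E) : V →₀ ℤ :=
  lap t h (single (t estar) 1) - single (h estar) 1 - single (t estar) 1

lemma rho0_eq (estar : E) (x : V →₀ ℤ) :
    rho0 t h estar x = (S V x) • Cvec t h estar + x := by
  have hm : rho0 t h estar
      = (S V).smulRight (Cvec t h estar) + LinearMap.id := by
    refine lhom_ext1 fun v => ?_
    simp only [LinearMap.add_apply, LinearMap.smulRight_apply, LinearMap.id_apply, S_single]
    rw [rho0, lift_single1, one_smul, Cvec]
  rw [hm]
  simp only [LinearMap.add_apply, LinearMap.smulRight_apply, LinearMap.id_apply]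

lemma S_C (estar : E) : S V (Cvec t h estar) = -2 := by
  rw [Cvec, map_sub, map_sub, S_lap, S_single, S_single]
  norm_num

lemma S_rho0 (estar : E) (x : V →₀ ℤ) : S V (rho0 t h estar x) = - S V x := by
  rw [rho0_eq, map_add, LinearMap.map_smul, S_C, smul_eq_mul]
  ring

lemma S_phiG (estar : E) (y : V →₀ ℤ) :
    S V (phiMod t h (t estar) y) = y (t estar) := by
  rw [phiG_eq, map_add, LinearMap.map_smul, map_sub, S_single, S_lap, S_lap, smul_eq_mul]
  ring

/-- Direction (⇒): if `ρ₀ z` is in the image of `φ_G` then `σ z` is in the image of `φ_L`. -/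
lemma sigma_mem {k : ℕ} (hreg : ∀ v : V, outdeg t v = k) (estar : E) (z : V →₀ ℤ)
    (hz : rho0 t h estar z ∈ LinearMap.range (phiMod t h (t estar))) :
    sigmaMap t z ∈ LinearMap.range
      (phiMod (fun p : LineEdge t h => p.1.1) (fun p : LineEdge t h => p.1.2) estar) := by
  set φL := phiMod (fun p : LineEdge t h => p.1.1) (fun p : LineEdge t h => p.1.2) estar
    with hφL
  obtain ⟨y, hy⟩ := hz
  have hyw : y (t estar) = - S V z := by
    rw [← S_phiG t h estar y, hy, S_rho0]
  have hz2 : z = phiMod t h (t estar) y - (S V z) • Cvec t h estar := by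
    rw [hy, rho0_eq]; abel
  refine ⟨sigmaMap t y - (((k:ℤ)+1) * y (t estar)) • single estar 1, ?_⟩
  have h5 : φL (single estar 1) = single estar 1 := by
    rw [hφL, phiMod_single, if_pos rfl]
  have h4 := sigma_lap t h hreg estar y
  rw [map_sub, LinearMap.map_smul, h5]
  conv_rhs => rw [hz2]
  rw [map_sub, LinearMap.map_smul, phiG_eq t h estar y, map_add, LinearMap.map_smul, map_sub,
    Cvec, map_sub, map_sub, h4, hyw]
  module

/-- Direction (⇐): if `σ z` is in the image of `φ_L` then `ρ₀ z` is in the image of `φ_G`. -/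
lemma rho0_mem {k : ℕ} (hreg : ∀ v : V, outdeg t v = k) (hk : 0 < k) (estar : E) (z : V →₀ ℤ)
    (hz : sigmaMap t z ∈ LinearMap.range
      (phiMod (fun p : LineEdge t h => p.1.1) (fun p : LineEdge t h => p.1.2) estar)) :
    rho0 t h estar z ∈ LinearMap.range (phiMod t h (t estar)) := by
  obtain ⟨y, hy⟩ := hz
  have hknz : (k:ℤ) ≠ 0 := by exact_mod_cast hk.ne'
  -- coefficientwise equation
  have hcoef : ∀ e : E, z (t e)
      = tau h estar y (t e) - (k:ℤ) * y e
        + (if e = estar then ((k:ℤ)+1) * y estar else 0) := by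
    intro e
    have h1 := phiL_eq t h hreg estar y
    rw [hy] at h1
    have h2 := congrArg (fun g : E →₀ ℤ => g e) h1
    simp only [Finsupp.add_apply, Finsupp.sub_apply, Finsupp.smul_apply, smul_eq_mul,
      Finsupp.single_apply, sigma_apply] at h2
    by_cases he : e = estar
    · subst he
      rw [if_pos rfl, h2, if_pos rfl]
      ring
    · rw [if_neg he, add_zero, h2, if_neg (fun hh => he hh.symm)]
      ring
  -- divisibility
  have hdvd : ∀ v : V, (k:ℤ) ∣ (z v - tau h estar y v) := by
    intro v
    rcases Nat.lt_or_ge 1 k with hk2 | hk1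
    · -- k ≥ 2 : there is an out-edge of v other than estar
      have hcard : 1 < (Finset.univ.filter fun e => t e = v).card :=
        lt_of_lt_of_eq hk2 (hreg v).symm
      obtain ⟨e, he, hne⟩ := Finset.exists_mem_ne hcard estar
      have hte : t e = v := (Finset.mem_filter.mp he).2
      refine ⟨- y e, ?_⟩
      have := hcoef e
      rw [if_neg hne, add_zero, hte] at this
      linarith [this]
    · -- k = 1
      have : k = 1 := by omega
      rw [this]; exact one_dvd _
  -- the vector m
  set m : V →₀ ℤ := Finsupp.equivFunOnFinite.symm
    (fun v => (z v - tau h estar y v) / k) with hm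
  have hmv : ∀ v : V, (k:ℤ) * m v = z v - tau h estar y v := by
    intro v
    have : m v = (z v - tau h estar y v) / k := by
      rw [hm]; rfl
    rw [this]
    exact Int.mul_ediv_cancel' (hdvd v)
  have hye : ∀ e : E, e ≠ estar → y e = - m (t e) := by
    intro e he
    have h1 := hcoef e
    rw [if_neg he, add_zero] at h1
    have h2 := hmv (t e)
    have h3 : (k:ℤ) * m (t e) = - ((k:ℤ) * y e) := by rw [h2]; linarith [h1]
    have := mul_left_cancel₀ hknz (by rw [h3]; ring : (k:ℤ) * m (t e) = (k:ℤ) * (- y e))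
    linarith [this]
  -- tau y in terms of m
  have hty : tau h estar y
      = - (lap t h m + (k:ℤ) • m) + m (t estar) • single (h estar) 1 := by
    rw [tau_apply, ← SumT t h hreg m]
    have hpt : ∀ e : E, (if e = estar then 0 else y e • single (h e) (1:ℤ))
        = - (m (t e) • single (h e) (1:ℤ))
          + (if e = estar then m (t estar) • single (h estar) (1:ℤ) else 0) := by
      intro e
      by_cases he : e = estar
      · subst he
        rw [if_pos rfl, if_pos rfl]
        abel
      · rw [if_neg he, if_neg he, hye e he, add_zero, neg_smul]
    rw [Finset.sum_congr rfl fun e _ => hpt e, Finset.sum_add_distrib,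
      Finset.sum_ite_eq' Finset.univ estar
        (fun _ => m (t estar) • single (h estar) (1:ℤ)),
      if_pos (Finset.mem_univ estar), ← Finset.sum_neg_distrib]
  -- z in terms of m
  have hz2 : z = tau h estar y + (k:ℤ) • m := by
    ext v
    have := hmv v
    simp only [Finsupp.add_apply, Finsupp.smul_apply, smul_eq_mul]
    linarith [this]
  have hzm : z = - lap t h m + m (t estar) • single (h estar) 1 := by
    rw [hz2, hty]; abel
  have hSz : S V z = m (t estar) := by
    rw [hzm, map_add, map_neg, S_lap, LinearMap.map_smul, S_single, smul_eq_mul]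
    ring
  refine ⟨- m, ?_⟩
  rw [map_neg, phiG_eq t h estar m, rho0_eq, hSz, Cvec]
  conv_rhs => rw [hzm]
  module


lemma rho_eq (estar : E) (x : E →₀ ℤ) :
    rho t h estar x = rho0 t h estar (tau h estar x) := by
  have hm : rho t h estar = (rho0 t h estar).comp (tau h estar) := by
    refine lhom_ext1 fun e => ?_
    rw [rho, lift_single1]
    simp only [LinearMap.comp_apply, tau_single]
    split_ifs with he
    · rw [map_zero]
    · rw [rho0, lift_single1]
  exact DFunLike.congr_fun hm x

lemma main_iff {k : ℕ} (hreg : ∀ v : V, outdeg t v = k) (hk : 0 < k) (estar : E) (x : E →₀ ℤ) :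
    rho t h estar x ∈ LinearMap.range (phiMod t h (t estar))
      ↔ (k:ℤ) • x ∈ LinearMap.range
          (phiMod (fun p : LineEdge t h => p.1.1) (fun p : LineEdge t h => p.1.2) estar) := by
  set φL := phiMod (fun p : LineEdge t h => p.1.1) (fun p : LineEdge t h => p.1.2) estar
    with hφL
  have h5 : φL (single estar 1) = single estar 1 := by
    rw [hφL, phiMod_single, if_pos rfl]
  constructor
  · intro hx
    rw [rho_eq] at hx
    obtain ⟨g, hg⟩ := sigma_mem t h hreg estar (tau h estar x) hx
    refine ⟨g - x + (x estar) • (((k:ℤ)+1) • single estar 1), ?_⟩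
    rw [map_add, map_sub, hg, LinearMap.map_smul, LinearMap.map_smul, h5,
      phiL_eq t h hreg estar x]
    module
  · rintro ⟨g, hg⟩
    rw [rho_eq]
    apply rho0_mem t h hreg hk estar
    refine ⟨x - (x estar) • (((k:ℤ)+1) • single estar 1) + g, ?_⟩
    rw [map_add, map_sub, hg, LinearMap.map_smul, LinearMap.map_smul, h5,
      phiL_eq t h hreg estar x]
    module

end Aux2

/-- if moreover `G` is `k`-out-regular, the kernel of the induced
homomorphism `ρ̄ : K(𝓛G, e*) → K(G, w*)` is exactly the `k`-torsion subgroup. -/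

theorem ker_rho_bar_eq_k_torsion
    {V E : Type*} [Fintype V] [Fintype E] [DecidableEq V] [DecidableEq E]
    (t h : E → V) (estar : E) (k : ℕ) (hk : 0 < k)
    (hreg : ∀ v : V, outdeg t v = k)
    (hin : ∀ v : V, 1 ≤ indeg h v) (hv : 2 ≤ indeg h (h estar)) :
    ∀ ρbar : ((E →₀ ℤ) ⧸ LinearMap.range
          (phiMod (fun p : LineEdge t h => p.1.1) (fun p : LineEdge t h => p.1.2) estar)) →ₗ[ℤ]
        ((V →₀ ℤ) ⧸ LinearMap.range (phiMod t h (t estar))),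
      (∀ x : E →₀ ℤ,
          ρbar (Submodule.Quotient.mk x) = Submodule.Quotient.mk (rho t h estar x)) →
      LinearMap.ker ρbar =
        Submodule.torsionBy ℤ ((E →₀ ℤ) ⧸ LinearMap.range
          (phiMod (fun p : LineEdge t h => p.1.1) (fun p : LineEdge t h => p.1.2) estar)) (k : ℤ) := by
  intro ρbar hρbar
  ext q
  obtain ⟨x, rfl⟩ := Submodule.Quotient.mk_surjective _ q
  rw [LinearMap.mem_ker, hρbar x, Submodule.Quotient.mk_eq_zero,
    Submodule.mem_torsionBy_iff, ← Submodule.Quotient.mk_smul, Submodule.Quotient.mk_eq_zero]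
  exact main_iff t h hreg hk estar x
end

section
/- Let G be a finite multidigraph that is k-out-regular for a positive integer k, with an edge e* = (w*, v*). Let τ̄ : K(𝓛G, e*) → cok ψ and σ̄ : cok ψ → K(𝓛G, e*) be the homomorphisms induced by τ and σ respectively. Then the composition σ̄ ∘ τ̄ equals multiplication by k on K(𝓛G, e*); in particular, for every edge e of G, the class of σ(τ(e)) in K(𝓛G, e*) equals k times the class of e. -/
open Finsupp

lemma lift_single' {X M : Type*} [AddCommGroup M] (f : X → M) (x : X) :
    Finsupp.lift M ℤ X f (Finsupp.single x 1) = f x := by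
  simp [Finsupp.lift_apply, Finsupp.sum_single_index]

lemma sum_ite_subtype {V E : Type*} [Fintype E] [DecidableEq V] [DecidableEq E]
    (t h : E → V) (e : E) {M : Type*} [AddCommMonoid M] (g : E → M) :
    (∑ p : LineEdge t h, (if p.1.1 = e then g p.1.2 else 0))
      = ∑ f : E, if t f = h e then g f else 0 := by
  classical
  show (∑ p : {p : E × E // h p.1 = t p.2}, (if p.1.1 = e then g p.1.2 else 0))
    = ∑ f : E, if t f = h e then g f else 0
  rw [← Finset.sum_subtype (Finset.univ.filter fun p : E × E => h p.1 = t p.2)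
    (by simp) (fun p : E × E => if p.1 = e then g p.2 else 0)]
  rw [Finset.sum_filter, Fintype.sum_prod_type]
  rw [Finset.sum_eq_single e]
  · simp [eq_comm]
  · intro a _ hne; simp [hne]
  · simp

lemma key_mem_range {V E : Type*} [Fintype E] [DecidableEq V] [DecidableEq E]
    (t h : E → V) (estar : E) (k : ℕ)
    (hreg : ∀ v : V, outdeg t v = k) (e : E) :
    sigmaMap t (tau h estar (Finsupp.single e 1)) - (k : ℤ) • Finsupp.single e 1
      ∈ LinearMap.range
        (phiMod (fun p : LineEdge t h => p.1.1) (fun p : LineEdge t h => p.1.2) estar) := by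
  by_cases he : e = estar
  · subst he
    refine ⟨-(k : ℤ) • Finsupp.single e 1, ?_⟩
    rw [map_smul]
    rw [show phiMod (fun p : LineEdge t h => p.1.1) (fun p : LineEdge t h => p.1.2) e
        (Finsupp.single e 1) = Finsupp.single e 1 from by
      unfold phiMod; rw [lift_single']; simp]
    rw [show tau h e (Finsupp.single e 1) = 0 from by
      unfold tau; rw [lift_single']; simp]
    simp
  · refine ⟨Finsupp.single e 1, ?_⟩
    have h1 : phiMod (fun p : LineEdge t h => p.1.1) (fun p : LineEdge t h => p.1.2) estar
        (Finsupp.single e 1)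
        = ∑ p : LineEdge t h,
            if p.1.1 = e then Finsupp.single p.1.2 (1:ℤ) - Finsupp.single e 1 else 0 := by
      unfold phiMod; rw [lift_single']
      rw [if_neg he]
      unfold lap; rw [lift_single']
    have h2 : tau h estar (Finsupp.single e 1) = Finsupp.single (h e) 1 := by
      unfold tau; rw [lift_single', if_neg he]
    have h3 : sigmaMap t (Finsupp.single (h e) 1)
        = ∑ f : E, if t f = h e then Finsupp.single f (1:ℤ) else 0 := by
      unfold sigmaMap; rw [lift_single']
    rw [h1, h2, h3]
    have split : ∀ p : LineEdge t h,
        (if p.1.1 = e then Finsupp.single p.1.2 (1:ℤ) - Finsupp.single e 1 else 0)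
        = (if p.1.1 = e then Finsupp.single p.1.2 (1:ℤ) else 0)
          - (if p.1.1 = e then Finsupp.single e (1:ℤ) else 0) := by
      intro p; split <;> simp
    rw [Finset.sum_congr rfl (fun p _ => split p), Finset.sum_sub_distrib]
    rw [sum_ite_subtype t h e (fun f => Finsupp.single f (1:ℤ))]
    rw [sum_ite_subtype t h e (fun _ => Finsupp.single e (1:ℤ))]
    have C : (∑ f : E, if t f = h e then Finsupp.single e (1:ℤ) else 0)
        = (k : ℤ) • Finsupp.single e 1 := by
      rw [← Finset.sum_filter, Finset.sum_const,
        show (Finset.univ.filter fun f => t f = h e).card = k from hreg (h e)]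
      simp
    rw [C]

/-- for a `k`-out-regular graph, `σ̄ ∘ τ̄` is multiplication by `k`
on `K(𝓛G, e*)`; in particular the class of `σ(τ(e))` equals `k` times the class
of `e` for every edge `e`. -/
theorem sigma_bar_comp_tau_bar_eq_smul_k
    {V E : Type*} [Fintype E] [DecidableEq V] [DecidableEq E]
    (t h : E → V) (estar : E) (k : ℕ) (hk : 0 < k)
    (hreg : ∀ v : V, outdeg t v = k) :
    ∀ (τbar : ((E →₀ ℤ) ⧸ LinearMap.range
          (phiMod (fun p : LineEdge t h => p.1.1) (fun p : LineEdge t h => p.1.2) estar)) →ₗ[ℤ]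
        ((V →₀ ℤ) ⧸ LinearMap.range (psi t h estar)))
      (σbar : ((V →₀ ℤ) ⧸ LinearMap.range (psi t h estar)) →ₗ[ℤ]
        ((E →₀ ℤ) ⧸ LinearMap.range
          (phiMod (fun p : LineEdge t h => p.1.1) (fun p : LineEdge t h => p.1.2) estar))),
      (∀ x : E →₀ ℤ,
        τbar (Submodule.Quotient.mk x) = Submodule.Quotient.mk (tau h estar x)) →
      (∀ y : V →₀ ℤ,
        σbar (Submodule.Quotient.mk y) = Submodule.Quotient.mk (sigmaMap t y)) →
      (∀ z, σbar (τbar z) = (k : ℤ) • z) ∧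
      (∀ e : E,
        (Submodule.Quotient.mk (sigmaMap t (tau h estar (Finsupp.single e 1))) :
          (E →₀ ℤ) ⧸ LinearMap.range
            (phiMod (fun p : LineEdge t h => p.1.1) (fun p : LineEdge t h => p.1.2) estar)) =
          (k : ℤ) • Submodule.Quotient.mk (Finsupp.single e 1)) := by
  
  intro τbar σbar hτ hσ
  have base : ∀ a : E,
      (Submodule.Quotient.mk (sigmaMap t (tau h estar (Finsupp.single a 1))) :
        (E →₀ ℤ) ⧸ LinearMap.range
          (phiMod (fun p : LineEdge t h => p.1.1) (fun p : LineEdge t h => p.1.2) estar))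
        = (k : ℤ) • Submodule.Quotient.mk (Finsupp.single a 1) := by
    intro a
    rw [← Submodule.Quotient.mk_smul]
    exact (Submodule.Quotient.eq _).mpr (key_mem_range t h estar k hreg a)
  have main : ∀ x : E →₀ ℤ,
      (Submodule.Quotient.mk (sigmaMap t (tau h estar x)) :
        (E →₀ ℤ) ⧸ LinearMap.range
          (phiMod (fun p : LineEdge t h => p.1.1) (fun p : LineEdge t h => p.1.2) estar))
        = (k : ℤ) • Submodule.Quotient.mk x := by
    intro x
    induction x using Finsupp.induction_linear with
    | zero => simp
    | add a b ha hb =>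
        rw [map_add, map_add, Submodule.Quotient.mk_add, Submodule.Quotient.mk_add,
          ha, hb, smul_add]
    | single a b =>
        have hb : (Finsupp.single a b : E →₀ ℤ) = b • Finsupp.single a 1 := by
          rw [Finsupp.smul_single, smul_eq_mul, mul_one]
        rw [hb, map_smul, map_smul, Submodule.Quotient.mk_smul, base a,
          Submodule.Quotient.mk_smul, smul_comm]
  refine ⟨?_, fun e => main (Finsupp.single e 1)⟩
  intro z
  obtain ⟨x, rfl⟩ := Submodule.Quotient.mk_surjective _ z
  rw [hτ, hσ, main]
end
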